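/- For every irrational θ ∈ (0,1), the heavy set H_θ = {x ∈ [0,1) : Sₙ(x) ≥ 0 for all n ≥ 1} is infinite. -/

import Mathlib

open Filter Set

/-- The function `f = χ_{[0,1/2]} - χ_{(1/2,1)}` on the circle, evaluated at `x mod 1`. -/
noncomputable def circf (x : ℝ) : ℝ := if Int.fract x ≤ 1/2 then 1 else -1

/-- Birkhoff sums `Sₙ(x) = Σ_{i=0}^{n-1} f(x + iθ)`. -/
noncomputable def birk (θ : ℝ) (n : ℕ) (x : ℝ) : ℝ :=
  ∑ i ∈ Finset.range n, circf (x + i * θ)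

lemma circf_le_one (z : ℝ) : circf z ≤ 1 := by unfold circf; split <;> norm_num

lemma neg_one_le_circf (z : ℝ) : -1 ≤ circf z := by unfold circf; split <;> norm_num

lemma circf_sub_int (z : ℝ) (a : ℤ) : circf (z - a) = circf z := by
  unfold circf; rw [Int.fract_sub_intCast]

lemma circf_pair (z : ℝ) : 0 ≤ circf z + circf (z + 1/2) := by
  by_cases h : Int.fract z ≤ 1/2
  · have h1 : circf z = 1 := if_pos h
    have h2 := neg_one_le_circf (z + 1/2)
    linarith
  · push_neg at h
    have h1 : circf z = -1 := if_neg (by linarith)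
    have hz1 : Int.fract z < 1 := Int.fract_lt_one z
    have hfl : Int.fract z = z - ⌊z⌋ := (Int.self_sub_floor z).symm
    have key : Int.fract (z + 1/2) = Int.fract z - 1/2 := by
      have e1 : z + 1/2 = (⌊z⌋ : ℝ) + ((Int.fract z - 1/2) + 1) := by
        rw [hfl]; ring
      rw [e1, Int.fract_intCast_add, Int.fract_add_one,
        Int.fract_eq_self.mpr ⟨by linarith, by linarith⟩]
    have h2 : circf (z + 1/2) = 1 := if_pos (by rw [key]; linarith)
    linarith

lemma birk_cocycle (θ : ℝ) (m n : ℕ) (x : ℝ) :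
    birk θ (m + n) x = birk θ m x + birk θ n (x + m * θ) := by
  induction n with
  | zero => simp [birk]
  | succ n ih =>
    have e : m + (n + 1) = (m + n) + 1 := by ring
    rw [e]
    unfold birk at *
    rw [Finset.sum_range_succ, Finset.sum_range_succ, ih]
    have : x + ↑(m + n) * θ = (x + ↑m * θ) + ↑n * θ := by push_cast; ring
    rw [this]; ring

lemma birk_le (θ : ℝ) (n : ℕ) (x : ℝ) : birk θ n x ≤ n := by
  calc birk θ n x ≤ ∑ _i ∈ Finset.range n, (1:ℝ) :=
        Finset.sum_le_sum (fun i _ => circf_le_one _)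
    _ = n := by simp

lemma birk_int (θ : ℝ) (n : ℕ) (x : ℝ) : ∃ k : ℤ, birk θ n x = k := by
  induction n with
  | zero => exact ⟨0, by simp [birk]⟩
  | succ n ih =>
    obtain ⟨k, hk⟩ := ih
    unfold birk at *
    rw [Finset.sum_range_succ, hk]
    rcases (ite_eq_or_eq (Int.fract (x + n * θ) ≤ 1/2) (1:ℝ) (-1)) with h | h
    · exact ⟨k + 1, by rw [show circf (x + n*θ) = 1 from h]; push_cast; ring⟩
    · exact ⟨k - 1, by rw [show circf (x + n*θ) = -1 from h]; push_cast; ring⟩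

lemma birk_sub_int (θ : ℝ) (n : ℕ) (x : ℝ) (a : ℤ) :
    birk θ n (x - a) = birk θ n x := by
  unfold birk
  refine Finset.sum_congr rfl (fun i _ => ?_)
  rw [show x - ↑a + ↑i * θ = (x + ↑i * θ) - ↑a by ring, circf_sub_int]

lemma birk_pair (θ : ℝ) (n : ℕ) (x : ℝ) :
    0 ≤ birk θ n x + birk θ n (x + 1/2) := by
  unfold birk
  rw [← Finset.sum_add_distrib]
  refine Finset.sum_nonneg (fun i _ => ?_)
  rw [show x + 1/2 + ↑i * θ = (x + ↑i * θ) + 1/2 by ring]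
  exact circf_pair _

lemma birk_neg_le (θ : ℝ) (n : ℕ) (x : ℝ) (h : birk θ n x < 0) : birk θ n x ≤ -1 := by
  obtain ⟨k, hk⟩ := birk_int θ n x
  rw [hk] at h ⊢
  have : k < 0 := by exact_mod_cast h
  have : k ≤ -1 := by omega
  exact_mod_cast this

lemma circf_local (z : ℝ) : ∃ ε > 0, ∀ w, |w - z| < ε → circf w ≤ circf z := by
  by_cases h : Int.fract z ≤ 1/2
  · exact ⟨1, one_pos, fun w _ => by rw [show circf z = 1 from if_pos h]; exact circf_le_one w⟩
  · push_neg at h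
    have hz1 : Int.fract z < 1 := Int.fract_lt_one z
    have hfl : Int.fract z = z - ⌊z⌋ := (Int.self_sub_floor z).symm
    refine ⟨min (Int.fract z - 1/2) (1 - Int.fract z), lt_min (by linarith) (by linarith),
      fun w hw => ?_⟩
    have h1 := abs_lt.mp hw
    have e : Int.fract w = w - ⌊z⌋ := by
      rw [← Int.fract_sub_intCast w ⌊z⌋]
      refine Int.fract_eq_self.mpr ⟨?_, ?_⟩
      · have := min_le_left (Int.fract z - 1/2) (1 - Int.fract z); linarith
      · have := min_le_right (Int.fract z - 1/2) (1 - Int.fract z); linarith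
    have : ¬ (Int.fract w ≤ 1/2) := by
      rw [e]
      have := min_le_left (Int.fract z - 1/2) (1 - Int.fract z)
      push_neg
      linarith
    rw [show circf w = -1 from if_neg this, show circf z = -1 from if_neg (by linarith)]

lemma birk_local (θ : ℝ) (n : ℕ) (x : ℝ) :
    ∃ ε > 0, ∀ y, |y - x| < ε → birk θ n y ≤ birk θ n x := by
  induction n with
  | zero => exact ⟨1, one_pos, fun y _ => by simp [birk]⟩
  | succ n ih =>
    obtain ⟨ε₁, hε₁, h1⟩ := ih
    obtain ⟨ε₂, hε₂, h2⟩ := circf_local (x + n * θ)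
    refine ⟨min ε₁ ε₂, lt_min hε₁ hε₂, fun y hy => ?_⟩
    unfold birk at *
    rw [Finset.sum_range_succ, Finset.sum_range_succ]
    have hy1 : |y - x| < ε₁ := lt_of_lt_of_le hy (min_le_left _ _)
    have hy2 : |(y + n * θ) - (x + n * θ)| < ε₂ := by
      rw [show (y + n * θ) - (x + n * θ) = y - x by ring]
      exact lt_of_lt_of_le hy (min_le_right _ _)
    exact add_le_add (h1 y hy1) (h2 _ hy2)

lemma birk_isOpen (θ : ℝ) (n : ℕ) : IsOpen {x : ℝ | birk θ n x < 0} := by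
  rw [Metric.isOpen_iff]
  intro x hx
  obtain ⟨ε, hε, hloc⟩ := birk_local θ n x
  exact ⟨ε, hε, fun y hy => lt_of_le_of_lt (hloc y (by simpa [Real.dist_eq] using hy)) hx⟩

lemma uniform_N (θ : ℝ) (H : ∀ x : ℝ, ∃ n : ℕ, 1 ≤ n ∧ birk θ n x < 0) :
    ∃ N : ℕ, 1 ≤ N ∧ ∀ x : ℝ, ∃ n : ℕ, 1 ≤ n ∧ n ≤ N ∧ birk θ n x ≤ -1 := by
  have hcov : Set.Icc (0:ℝ) 1 ⊆ ⋃ n : ℕ, {x : ℝ | birk θ n x < 0} := by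
    intro x _
    obtain ⟨n, _, hn⟩ := H x
    exact Set.mem_iUnion.mpr ⟨n, hn⟩
  obtain ⟨t, ht⟩ := isCompact_Icc.elim_finite_subcover _ (birk_isOpen θ) hcov
  refine ⟨max (t.sup id) 1, le_max_right _ _, fun x => ?_⟩
  -- reduce to fract x ∈ [0,1]
  have hfx : Int.fract x ∈ Set.Icc (0:ℝ) 1 :=
    ⟨Int.fract_nonneg x, le_of_lt (Int.fract_lt_one x)⟩
  obtain ⟨n, hnt, hn⟩ := Set.mem_iUnion₂.mp (ht hfx)
  simp only [Set.mem_setOf_eq] at hn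
  have hb : birk θ n x < 0 := by
    have hfr : Int.fract x = x - (⌊x⌋ : ℤ) := (Int.self_sub_floor x).symm
    rw [hfr, birk_sub_int] at hn
    exact hn
  have hn1 : 1 ≤ n := by
    rcases Nat.eq_zero_or_pos n with h | h
    · exfalso; rw [h] at hb; simp [birk] at hb
    · exact h
  refine ⟨n, hn1, le_trans (Finset.le_sup (f := id) hnt) (le_max_left _ _), birk_neg_le _ _ _ hb⟩

lemma birk_drift (θ : ℝ) (N : ℕ) (hN1 : 1 ≤ N)
    (hN : ∀ x : ℝ, ∃ n : ℕ, 1 ≤ n ∧ n ≤ N ∧ birk θ n x ≤ -1) :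
    ∀ m : ℕ, ∀ x : ℝ, birk θ m x ≤ 2 * N - (m : ℝ) / N := by
  intro m
  induction m using Nat.strong_induction_on with
  | _ m ih =>
    intro x
    have hNpos : (0:ℝ) < N := by exact_mod_cast hN1
    by_cases hm : m ≤ N
    · have h1 := birk_le θ m x
      have h2 : (m:ℝ) ≤ N := by exact_mod_cast hm
      have h3 : (m:ℝ) / N ≤ 1 := by
        rw [div_le_one hNpos]; exact h2
      have h4 : (1:ℝ) ≤ N := by exact_mod_cast hN1
      linarith
    · push_neg at hm
      obtain ⟨n, hn1, hnN, hneg⟩ := hN x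
      have hnm : n ≤ m := le_trans hnN (le_of_lt hm)
      have hlt : m - n < m := Nat.sub_lt (by omega) (by omega)
      have ihh := ih (m - n) hlt (x + n * θ)
      have hco : birk θ m x = birk θ n x + birk θ (m - n) (x + n * θ) := by
        rw [← birk_cocycle, Nat.add_sub_cancel' hnm]
      have hcast : ((m - n : ℕ) : ℝ) = (m : ℝ) - n := by
        push_cast [Nat.cast_sub hnm]; ring
      rw [hco]
      rw [hcast] at ihh
      have hnN' : (n : ℝ) ≤ N := by exact_mod_cast hnN
      have : (n:ℝ)/N ≤ 1 := by rw [div_le_one hNpos]; exact hnN'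
      have hsub : ((m:ℝ) - n)/N = (m:ℝ)/N - (n:ℝ)/N := by ring
      rw [hsub] at ihh
      linarith

lemma heavy_exists (θ : ℝ) : ∃ x : ℝ, ∀ n : ℕ, 1 ≤ n → 0 ≤ birk θ n x := by
  by_contra h
  push_neg at h
  obtain ⟨N, hN1, hN⟩ := uniform_N θ (fun x => h x)
  have hNpos : (0:ℝ) < N := by exact_mod_cast hN1
  set m := 2 * N * N + N with hm
  have hval : (2:ℝ) * N - (m : ℝ) / N = -1 := by
    rw [hm]
    push_cast
    field_simp
    ring
  have h0 := birk_drift θ N hN1 hN m 0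
  have h12 := birk_drift θ N hN1 hN m (0 + 1/2)
  have := birk_pair θ m 0
  rw [hval] at h0 h12
  linarith

/-- The heavy set `H_θ`. -/
noncomputable def heavy (θ : ℝ) : Set ℝ :=
  {x ∈ Set.Ico (0:ℝ) 1 | ∀ n : ℕ, 1 ≤ n → 0 ≤ birk θ n x}

/-- The strictly heavy set `H*_θ`. -/
noncomputable def sheavy (θ : ℝ) : Set ℝ :=
  {x ∈ Set.Ico (0:ℝ) 1 | ∀ n : ℕ, 1 ≤ n → 0 < birk θ n x}

/-- For every irrational `θ ∈ (0,1)`, the heavy set `H_θ` is infinite. -/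
theorem stmt12 (θ : ℝ) (hθ : Irrational θ) (h0 : 0 < θ) (h1 : θ < 1) :
    (heavy θ).Infinite := by
  obtain ⟨x₀, hx₀⟩ := heavy_exists θ
  have hpos : ∀ n : ℕ, 0 ≤ birk θ n x₀ := by
    intro n
    rcases Nat.eq_zero_or_pos n with h | h
    · rw [h]; simp [birk]
    · exact hx₀ n h
  -- future minima exist
  have key : ∀ m : ℕ, ∃ m', m ≤ m' ∧ ∀ n, m' ≤ n → birk θ m' x₀ ≤ birk θ n x₀ := by
    intro m
    set A : Set ℕ := {j : ℕ | ∃ n, m ≤ n ∧ birk θ n x₀ = (j : ℝ)} with hA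
    have hval : ∀ n : ℕ, ∃ j : ℕ, birk θ n x₀ = (j : ℝ) := by
      intro n
      obtain ⟨k, hk⟩ := birk_int θ n x₀
      have hk0 : 0 ≤ k := by
        have := hpos n; rw [hk] at this; exact_mod_cast this
      refine ⟨k.toNat, ?_⟩
      rw [hk]
      exact_mod_cast (Int.toNat_of_nonneg hk0).symm
    have hAne : A.Nonempty := by
      obtain ⟨j, hj⟩ := hval m
      exact ⟨j, m, le_refl m, hj⟩
    obtain ⟨n₀, hn₀m, hn₀⟩ := Nat.sInf_mem hAne
    refine ⟨n₀, hn₀m, fun n hn => ?_⟩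
    obtain ⟨j, hj⟩ := hval n
    have hjA : j ∈ A := ⟨n, le_trans hn₀m hn, hj⟩
    have := Nat.sInf_le hjA
    rw [hn₀, hj]
    exact_mod_cast this
  choose F hF1 hF2 using key
  set M : ℕ → ℕ := fun k => Nat.rec (F 0) (fun _ ih => F (ih + 1)) k with hM
  have hM0 : M 0 = F 0 := rfl
  have hMs : ∀ k, M (k + 1) = F (M k + 1) := fun k => rfl
  have hMmin : ∀ k, ∀ n, M k ≤ n → birk θ (M k) x₀ ≤ birk θ n x₀ := by
    intro k
    cases k with
    | zero => rw [hM0]; exact hF2 0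
    | succ k => rw [hMs]; exact hF2 (M k + 1)
  have hMmono : StrictMono M := by
    apply strictMono_nat_of_lt_succ
    intro k
    have := hF1 (M k + 1)
    rw [hMs]
    omega
  have hmem : ∀ k : ℕ, Int.fract (x₀ + (M k : ℕ) * θ) ∈ heavy θ := by
    intro k
    refine ⟨⟨Int.fract_nonneg _, Int.fract_lt_one _⟩, fun n hn => ?_⟩
    have he : Int.fract (x₀ + (M k : ℕ) * θ)
        = (x₀ + (M k : ℕ) * θ) - ((⌊x₀ + (M k : ℕ) * θ⌋ : ℤ) : ℝ) :=
      (Int.self_sub_floor _).symm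
    rw [he, birk_sub_int]
    have hco := birk_cocycle θ (M k) n x₀
    have hmin := hMmin k (M k + n) (Nat.le_add_right _ _)
    linarith
  refine Set.infinite_of_injective_forall_mem
    (f := fun k : ℕ => Int.fract (x₀ + (M k : ℕ) * θ)) ?_ hmem
  intro a b hab
  by_contra hne
  have hMne : M a ≠ M b := fun h => hne (hMmono.injective h)
  simp only at hab
  obtain ⟨z, hz⟩ := Int.fract_eq_fract.mp hab
  have hz' : ((M a : ℝ) - (M b : ℝ)) * θ = (z : ℝ) := by
    rw [← hz]; ring
  set d : ℤ := (M a : ℤ) - (M b : ℤ) with hd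
  have hdne : d ≠ 0 := by
    intro h
    apply hMne
    omega
  have hdr : ((d : ℤ) : ℝ) = (M a : ℝ) - (M b : ℝ) := by rw [hd]; push_cast; ring
  apply hθ
  refine ⟨(z : ℚ) / (d : ℚ), ?_⟩
  have hdR : ((d : ℤ) : ℝ) ≠ 0 := by exact_mod_cast hdne
  push_cast
  rw [eq_comm, eq_div_iff hdR, hdr]
  rw [mul_comm] at hz'
  linarith [hz']
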